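/- For the standard n-simplex Tₙ with vertices P₀ = 0 and P₁,…,Pₙ the standard basis vectors, and Pₙ₊₁ = (1/(n+1),…,1/(n+1)) its center of mass, the rule L(f) = ((n+1)/((n+2)·n!))·f(Pₙ₊₁) + (1/(n+2)!)·Σⱼ₌₀ⁿ f(Pⱼ) satisfies L(f) = ∫_{Tₙ} f dV for every polynomial f of total degree ≤ 2. -/

import Mathlib

open MeasureTheory MvPolynomial Pointwise

/-- The standard n-simplex in ℝⁿ. -/
def Simplex (n : ℕ) : Set (Fin n → ℝ) := {v | (∀ i, 0 ≤ v i) ∧ ∑ i, v i ≤ 1}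

/-- The vertices of the standard n-simplex: `P 0 = 0` and `P (k+1)` is the k-th
standard basis vector. -/
def simplexVertex (n : ℕ) (j : Fin (n + 1)) : Fin n → ℝ :=
  fun i => if (j : ℕ) = (i : ℕ) + 1 then 1 else 0

open intervalIntegral in
lemma beta2 (k b : ℕ) (hk : k ≤ 2) :
    ∫ t in (0:ℝ)..1, t ^ k * (1 - t) ^ b
      = (Nat.factorial k * Nat.factorial b : ℝ) / (Nat.factorial (k + b + 1) : ℝ) := by
  have h1 : ∫ t in (0:ℝ)..1, t ^ k * (1 - t) ^ b = ∫ s in (0:ℝ)..1, (1 - s) ^ k * s ^ b := by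
    have h := intervalIntegral.integral_comp_sub_left (a := (0:ℝ)) (b := 1)
      (fun t => t ^ k * (1 - t) ^ b) 1
    simp only [sub_sub_cancel, sub_self, sub_zero] at h
    rw [← h]
  rw [h1]
  have hb : ∀ m : ℕ, ∫ s in (0:ℝ)..1, s ^ m = (1:ℝ)/(m+1) := by
    intro m; rw [integral_pow]; norm_num
  interval_cases k
  · simp only [pow_zero, one_mul]
    rw [hb b]
    simp [Nat.factorial_succ]
    field_simp
  · have : ∀ s : ℝ, (1 - s) ^ 1 * s ^ b = s ^ b - s ^ (b+1) := by intro s; ring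
    simp only [this]
    rw [intervalIntegral.integral_sub (intervalIntegrable_pow b) (intervalIntegrable_pow (b+1)),
      hb, hb]
    have h2 : ((b:ℝ)+1) ≠ 0 := by positivity
    have h3 : ((b:ℝ)+1+1) ≠ 0 := by positivity
    have hf : (Nat.factorial (1 + b + 1) : ℝ) = (b+1+1) * ((b+1) * Nat.factorial b) := by
      rw [show 1 + b + 1 = b + 2 by ring, Nat.factorial_succ, Nat.factorial_succ]
      push_cast; ring
    rw [hf]
    have hfb : (Nat.factorial b : ℝ) ≠ 0 := by positivity
    field_simp
    push_cast; ring
  · have : ∀ s : ℝ, (1 - s) ^ 2 * s ^ b = s ^ b - 2 * s ^ (b+1) + s ^ (b+2) := by intro s; ring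
    simp only [this]
    rw [intervalIntegral.integral_add (((intervalIntegrable_pow b)).sub
        ((intervalIntegrable_pow (b+1)).const_mul 2)) (intervalIntegrable_pow (b+2)),
      intervalIntegral.integral_sub (intervalIntegrable_pow b)
        ((intervalIntegrable_pow (b+1)).const_mul 2),
      intervalIntegral.integral_const_mul, hb, hb, hb]
    have hf : (Nat.factorial (2 + b + 1) : ℝ) = (b+1+2) * ((b+1+1) * ((b+1) * Nat.factorial b)) := by
      rw [show 2 + b + 1 = b + 3 by ring, Nat.factorial_succ, Nat.factorial_succ,
        Nat.factorial_succ]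
      push_cast; ring
    rw [hf]
    have hfb : (Nat.factorial b : ℝ) ≠ 0 := by positivity
    have h2 : ((b:ℝ)+1) ≠ 0 := by positivity
    have h3 : ((b:ℝ)+1+1) ≠ 0 := by positivity
    have h4 : ((b:ℝ)+1+2) ≠ 0 := by positivity
    rw [Nat.factorial_two]
    field_simp
    all_goals (push_cast; ring)

lemma isClosed_simplex (n : ℕ) : IsClosed (Simplex n) := by
  have : Simplex n = (⋂ i, {v : Fin n → ℝ | 0 ≤ v i}) ∩ {v | ∑ i, v i ≤ 1} := by
    ext v; simp [Simplex, Set.mem_iInter]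
  rw [this]
  exact (isClosed_iInter fun i => isClosed_le continuous_const (continuous_apply i)).inter
    (isClosed_le (by fun_prop) continuous_const)

lemma simplex_subset_Icc (n : ℕ) : Simplex n ⊆ Set.Icc (0 : Fin n → ℝ) 1 := by
  rintro v ⟨h0, h1⟩
  constructor
  · intro i; exact h0 i
  · intro i
    calc v i ≤ ∑ j, v j := Finset.single_le_sum (fun j _ => h0 j) (Finset.mem_univ i)
    _ ≤ 1 := h1

lemma isCompact_simplex (n : ℕ) : IsCompact (Simplex n) :=
  IsCompact.of_isClosed_subset isCompact_Icc (isClosed_simplex n) (simplex_subset_Icc n)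

lemma measurableSet_simplex (n : ℕ) : MeasurableSet (Simplex n) :=
  (isClosed_simplex n).measurableSet

lemma continuous_mono {n : ℕ} (d : Fin n → ℕ) : Continuous fun v : Fin n → ℝ => ∏ i, v i ^ d i :=
  continuous_finset_prod _ fun i _ => (continuous_apply i).pow _

lemma dirichlet : ∀ (n : ℕ) (d : Fin n → ℕ), (∑ i, d i) ≤ 2 →
    ∫ v in Simplex n, ∏ i, v i ^ d i
      = (∏ i, (Nat.factorial (d i) : ℝ)) / (Nat.factorial (n + ∑ i, d i) : ℝ) := by
  intro n
  induction n with
  | zero =>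
    intro d _
    have h0 : Simplex 0 = Set.univ := by
      ext v; simp [Simplex]
    rw [h0]
    simp only [Finset.univ_eq_empty, Finset.prod_empty, Finset.sum_empty]
    rw [setIntegral_const]
    have : (volume : Measure (Fin 0 → ℝ)) Set.univ = 1 := by
      rw [volume_pi, Measure.pi_univ]; simp
    rw [measureReal_def, this]
    simp [Nat.factorial]
  | succ n ih =>
    intro d hd
    set k := d 0 with hkdef
    set d' : Fin n → ℕ := fun i => d i.succ with hd'def
    have hsum : ∑ i, d i = k + ∑ i, d' i := Fin.sum_univ_succ d
    set b : ℕ := n + ∑ i, d' i with hbdef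
    have hk2 : k ≤ 2 := le_trans (by
      rw [hsum]; exact Nat.le_add_right _ _) hd
    set M : ℝ := (∏ i, (Nat.factorial (d' i) : ℝ)) / (Nat.factorial b : ℝ) with hMdef
    have hM : ∫ v in Simplex n, ∏ i, v i ^ d' i = M := ih d' (by
      rw [hsum] at hd; omega)
    -- the measurable equiv
    set e := (MeasurableEquiv.piFinSuccAbove (fun _ : Fin (n+1) => ℝ) 0) with hedef
    have hesymm : ∀ p : ℝ × (Fin n → ℝ), e.symm p = Fin.insertNth 0 p.1 p.2 := fun p => rfl
    set S' : Set (ℝ × (Fin n → ℝ)) :=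
      {p | 0 ≤ p.1 ∧ (∀ i, 0 ≤ p.2 i) ∧ p.1 + ∑ i, p.2 i ≤ 1} with hS'def
    have hpre : e.symm ⁻¹' Simplex (n+1) = S' := by
      ext ⟨t, y⟩
      simp only [Set.mem_preimage, hesymm, Simplex, Set.mem_setOf_eq, hS'def]
      rw [Fin.forall_iff_succAbove 0, Fin.sum_univ_succAbove _ 0]
      simp [Fin.insertNth_apply_same, Fin.insertNth_apply_succAbove, and_assoc]
    have hfun : ∀ p : ℝ × (Fin n → ℝ),
        (∏ i, (e.symm p) i ^ d i) = p.1 ^ k * ∏ i, p.2 i ^ d' i := by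
      intro p
      rw [hesymm, Fin.prod_univ_succAbove _ 0]
      simp [Fin.insertNth_apply_same, Fin.insertNth_apply_succAbove, hd'def, hkdef]
    set f : ℝ × (Fin n → ℝ) → ℝ := fun p => p.1 ^ k * ∏ i, p.2 i ^ d' i with hfdef
    have h1 : ∫ v in Simplex (n+1), ∏ i, v i ^ d i = ∫ p in S', f p := by
      rw [← ((volume_preserving_piFinSuccAbove (fun _ : Fin (n+1) => ℝ) 0).symm e).setIntegral_preimage_emb
        e.symm.measurableEmbedding (fun v => ∏ i, v i ^ d i) (Simplex (n+1)), hpre]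
      exact setIntegral_congr_fun (by
        rw [← hpre]; exact e.symm.measurable (measurableSet_simplex _))
        (fun p _ => hfun p)
    have hS'c : IsClosed S' := by
      have : S' = {p : ℝ × (Fin n → ℝ) | 0 ≤ p.1} ∩
          ((⋂ i, {p : ℝ × (Fin n → ℝ) | 0 ≤ p.2 i}) ∩
            {p : ℝ × (Fin n → ℝ) | p.1 + ∑ i, p.2 i ≤ 1}) := by
        ext p; simp [hS'def, Set.mem_iInter]
      rw [this]
      refine (isClosed_le continuous_const continuous_fst).inter
        ((isClosed_iInter fun i => isClosed_le continuous_const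
          ((continuous_apply i).comp continuous_snd)).inter
          (isClosed_le (f := fun p : ℝ × (Fin n → ℝ) => p.1 + ∑ i, p.2 i) (by fun_prop) continuous_const))
    have hS'm : MeasurableSet S' := hS'c.measurableSet
    have hS'cpt : IsCompact S' := by
      refine IsCompact.of_isClosed_subset
        (isCompact_Icc.prod isCompact_Icc :
          IsCompact ((Set.Icc (0:ℝ) 1) ×ˢ (Set.Icc (0 : Fin n → ℝ) 1))) hS'c ?_
      rintro ⟨t, y⟩ ⟨h0, hy, hs⟩
      have hys : (0:ℝ) ≤ ∑ i, y i := Finset.sum_nonneg fun i _ => hy i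
      refine ⟨⟨h0, by linarith⟩, fun i => hy i, fun i => ?_⟩
      calc y i ≤ ∑ j, y j := Finset.single_le_sum (fun j _ => hy j) (Finset.mem_univ i)
      _ ≤ 1 := by linarith
    have hcont : Continuous f := (continuous_fst.pow k).mul
      ((continuous_mono d').comp continuous_snd)
    have hint : Integrable (S'.indicator f) := by
      rw [integrable_indicator_iff hS'm]
      exact hcont.continuousOn.integrableOn_compact hS'cpt
    have h2 : ∫ p in S', f p = ∫ t : ℝ, ∫ y : Fin n → ℝ, S'.indicator f (t, y) := by
      rw [← integral_indicator hS'm]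
      exact integral_prod _ hint
    have hinner : ∀ t : ℝ, t ≠ 1 →
        (∫ y : Fin n → ℝ, S'.indicator f (t, y)) =
          Set.indicator (Set.Icc (0:ℝ) 1) (fun t => t ^ k * (1-t) ^ b * M) t := by
      intro t ht
      by_cases h0t : 0 ≤ t
      · by_cases h1t : t ≤ 1
        · have htlt : t < 1 := lt_of_le_of_ne h1t ht
          have hc : (0:ℝ) < 1 - t := by linarith
          have hmem : ∀ y : Fin n → ℝ, ((t, y) ∈ S') ↔ y ∈ (1-t) • Simplex n := by
            intro y
            rw [Set.mem_smul_set_iff_inv_smul_mem₀ hc.ne']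
            simp only [hS'def, Set.mem_setOf_eq, Simplex, Pi.smul_apply, smul_eq_mul]
            constructor
            · rintro ⟨-, hy, hs⟩
              refine ⟨fun i => mul_nonneg (inv_nonneg.2 hc.le) (hy i), ?_⟩
              rw [← Finset.mul_sum, inv_mul_le_iff₀ hc]
              linarith
            · rintro ⟨hy, hs⟩
              have hy' : ∀ i, 0 ≤ y i := fun i =>
                (mul_nonneg_iff_of_pos_left (inv_pos.2 hc)).mp (hy i)
              rw [← Finset.mul_sum, inv_mul_le_iff₀ hc] at hs
              exact ⟨h0t, hy', by linarith⟩
          have hAind : ∀ y : Fin n → ℝ, S'.indicator f (t, y)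
              = ((1-t) • Simplex n).indicator (fun y => f (t, y)) y := by
            intro y
            by_cases hy : (t, y) ∈ S'
            · rw [Set.indicator_of_mem hy, Set.indicator_of_mem ((hmem y).mp hy)]
            · rw [Set.indicator_of_notMem hy,
                Set.indicator_of_notMem (fun h => hy ((hmem y).mpr h))]
          have hscale : ∫ y in (1-t) • Simplex n, ∏ i, y i ^ d' i
              = (1-t) ^ b * M := by
            have hs1 := Measure.setIntegral_comp_smul_of_pos (volume : Measure (Fin n → ℝ))
              (fun y : Fin n → ℝ => ∏ i, y i ^ d' i) (Simplex n) hc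
            rw [Module.finrank_fin_fun] at hs1
            have hs2 : ∀ y : Fin n → ℝ, (∏ i, ((1-t) • y) i ^ d' i)
                = (1-t) ^ (∑ i, d' i) * ∏ i, y i ^ d' i := by
              intro y
              simp only [Pi.smul_apply, smul_eq_mul, mul_pow, Finset.prod_mul_distrib]
              rw [Finset.prod_pow_eq_pow_sum]
            simp only [hs2] at hs1
            rw [integral_const_mul, hM] at hs1
            have := congrArg (fun z => ((1-t) ^ n) * z) hs1
            simp only [smul_eq_mul, ← mul_assoc] at this
            rw [mul_inv_cancel₀ (by positivity), one_mul] at this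
            rw [← this, hbdef, pow_add]
            try ring
          calc (∫ y : Fin n → ℝ, S'.indicator f (t, y))
              = ∫ y : Fin n → ℝ, ((1-t) • Simplex n).indicator (fun y => f (t, y)) y := by
                simp only [hAind]
            _ = ∫ y in (1-t) • Simplex n, f (t, y) := by
                rw [integral_indicator ((isCompact_simplex n).smul (1-t)).isClosed.measurableSet]
            _ = t ^ k * ((1-t) ^ b * M) := by
                simp only [hfdef]
                rw [integral_const_mul, hscale]
            _ = Set.indicator (Set.Icc (0:ℝ) 1) (fun t => t ^ k * (1-t) ^ b * M) t := by
                rw [Set.indicator_of_mem (Set.mem_Icc.mpr ⟨h0t, h1t⟩)]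
                ring
        · push_neg at h1t
          have hzero : ∀ y : Fin n → ℝ, S'.indicator f (t, y) = 0 := by
            intro y
            apply Set.indicator_of_notMem
            rintro ⟨-, hy, hs⟩
            have : (0:ℝ) ≤ ∑ i, y i := Finset.sum_nonneg fun i _ => hy i
            linarith
          simp only [hzero, integral_zero]
          rw [Set.indicator_of_notMem (fun h => absurd h.2 (not_le.mpr h1t))]
      · push_neg at h0t
        have hzero : ∀ y : Fin n → ℝ, S'.indicator f (t, y) = 0 := by
          intro y
          apply Set.indicator_of_notMem
          rintro ⟨h, -, -⟩
          linarith
        simp only [hzero, integral_zero]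
        rw [Set.indicator_of_notMem (fun h => absurd h.1 (not_le.mpr h0t))]
    have hae : (fun t : ℝ => ∫ y : Fin n → ℝ, S'.indicator f (t, y)) =ᵐ[volume]
        Set.indicator (Set.Icc (0:ℝ) 1) (fun t => t ^ k * (1-t) ^ b * M) := by
      have h1' : ∀ᵐ t : ℝ, t ≠ (1:ℝ) := by
        have h0 : (volume ({1} : Set ℝ)) = 0 := Real.volume_singleton
        have := measure_eq_zero_iff_ae_notMem.mp h0
        simpa using this
      filter_upwards [h1'] with t ht using hinner t ht
    have hfact : n + 1 + ∑ i, d i = k + b + 1 := by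
      rw [hsum, hbdef]; ring
    rw [h1, h2, integral_congr_ae hae, integral_indicator measurableSet_Icc,
      integral_Icc_eq_integral_Ioc, ← intervalIntegral.integral_of_le zero_le_one,
      intervalIntegral.integral_mul_const, beta2 k b hk2]
    rw [Fin.prod_univ_succ, hfact, hMdef]
    have hb0 : (Nat.factorial b : ℝ) ≠ 0 := by positivity
    have hkb0 : (Nat.factorial (k + b + 1) : ℝ) ≠ 0 := by positivity
    have : ∀ i : Fin n, (Nat.factorial (d i.succ) : ℝ) = (Nat.factorial (d' i) : ℝ) := by
      intro i; rw [hd'def]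
    simp only [this]
    field_simp
    ring

-- sum over vertices of the monomial, when d is a "delta at i₀ with value m ≥ 1"
lemma vertex_sum_single (n : ℕ) (d : Fin n → ℕ) (i₀ : Fin n) (hm : d i₀ ≠ 0)
    (h0 : ∀ i, i ≠ i₀ → d i = 0) :
    ∑ j : Fin (n + 1), ∏ i, (simplexVertex n j i) ^ d i = 1 := by
  have hprod : ∀ j : Fin (n + 1), ∏ i, (simplexVertex n j i) ^ d i
      = if j = i₀.succ then 1 else 0 := by
    intro j
    rw [Finset.prod_eq_single i₀ (fun i _ hi => by rw [h0 i hi, pow_zero]) (by simp)]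
    by_cases hj : j = i₀.succ
    · subst hj
      simp [simplexVertex, one_pow]
    · have hj' : (j : ℕ) ≠ (i₀ : ℕ) + 1 := by
        intro h
        apply hj
        apply Fin.ext
        simp [h]
      simp [simplexVertex, hj', zero_pow hm, hj]
  simp only [hprod]
  simp

lemma vertex_sum_pair (n : ℕ) (d : Fin n → ℕ) (i₀ i₁ : Fin n) (hne : i₀ ≠ i₁)
    (h₀ : d i₀ = 1) (h₁ : d i₁ = 1) :
    ∑ j : Fin (n + 1), ∏ i, (simplexVertex n j i) ^ d i = 0 := by
  refine Finset.sum_eq_zero fun j _ => ?_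
  by_cases hj : (j : ℕ) = (i₀ : ℕ) + 1
  · refine Finset.prod_eq_zero (Finset.mem_univ i₁) ?_
    have : (j : ℕ) ≠ (i₁ : ℕ) + 1 := by
      intro h; exact hne (Fin.ext (by omega))
    simp [simplexVertex, this, h₁]
  · refine Finset.prod_eq_zero (Finset.mem_univ i₀) ?_
    simp [simplexVertex, hj, h₀]

lemma key (n : ℕ) (d : Fin n → ℕ) (hd : ∑ i, d i ≤ 2) :
    ((n + 1 : ℝ) / ((n + 2) * (Nat.factorial n : ℝ))) * ∏ i, (1 / (n + 1 : ℝ)) ^ d i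
      + (1 / (Nat.factorial (n + 2) : ℝ)) * ∑ j : Fin (n + 1), ∏ i, (simplexVertex n j i) ^ d i
    = (∏ i, (Nat.factorial (d i) : ℝ)) / (Nat.factorial (n + ∑ i, d i) : ℝ) := by
  have hn1 : ((n : ℝ) + 1) ≠ 0 := by positivity
  have hn2 : ((n : ℝ) + 2) ≠ 0 := by positivity
  have hnf : (Nat.factorial n : ℝ) ≠ 0 := by positivity
  have hf1 : (Nat.factorial (n + 1) : ℝ) = (n + 1) * Nat.factorial n := by
    rw [Nat.factorial_succ]; push_cast; ring
  have hf2 : (Nat.factorial (n + 2) : ℝ) = (n + 2) * ((n + 1) * Nat.factorial n) := by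
    rw [Nat.factorial_succ, Nat.factorial_succ]; push_cast; ring
  have hcenter : ∏ i, (1 / (n + 1 : ℝ)) ^ d i = (1 / (n + 1 : ℝ)) ^ (∑ i, d i) :=
    Finset.prod_pow_eq_pow_sum _ _ _
  have hs : ∑ i, d i = 0 ∨ ∑ i, d i = 1 ∨ ∑ i, d i = 2 := by omega
  rcases hs with hs | hs | hs
  · -- all zero
    have hz : ∀ i, d i = 0 := by
      intro i
      have := Finset.sum_eq_zero_iff.mp hs
      exact this i (Finset.mem_univ i)
    have hV : ∑ j : Fin (n + 1), ∏ i, (simplexVertex n j i) ^ d i = (n + 1 : ℝ) := by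
      have : ∀ j : Fin (n + 1), ∏ i, (simplexVertex n j i) ^ d i = 1 := by
        intro j; refine Finset.prod_eq_one fun i _ => by rw [hz i, pow_zero]
      simp only [this]
      simp
    have hP : ∏ i, (Nat.factorial (d i) : ℝ) = 1 :=
      Finset.prod_eq_one fun i _ => by rw [hz i]; simp
    rw [hcenter, hV, hP, hs, hf2]
    simp only [pow_zero, Nat.add_zero, mul_one]
    field_simp
    ring
  · -- single index with d i₀ = 1
    obtain ⟨i₀, -, hi₀⟩ := Finset.exists_ne_zero_of_sum_ne_zero (by omega : ∑ i, d i ≠ 0)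
    have hle : d i₀ ≤ 1 := hs ▸ Finset.single_le_sum (f := d) (fun i _ => Nat.zero_le _)
      (Finset.mem_univ i₀)
    have hd₀ : d i₀ = 1 := by omega
    have hrest : ∀ i, i ≠ i₀ → d i = 0 := by
      intro i hi
      have h1 : ∑ j ∈ Finset.univ.erase i₀, d j = 0 := by
        have := Finset.add_sum_erase Finset.univ d (Finset.mem_univ i₀)
        omega
      exact Finset.sum_eq_zero_iff.mp h1 i (Finset.mem_erase.mpr ⟨hi, Finset.mem_univ i⟩)
    have hV := vertex_sum_single n d i₀ (by omega) hrest
    have hP : ∏ i, (Nat.factorial (d i) : ℝ) = 1 := by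
      refine Finset.prod_eq_one fun i _ => ?_
      by_cases hi : i = i₀
      · subst hi; rw [hd₀]; simp
      · rw [hrest i hi]; simp
    rw [hcenter, hV, hP, hs, hf1, hf2]
    field_simp
    ring
  · obtain ⟨i₀, -, hi₀⟩ := Finset.exists_ne_zero_of_sum_ne_zero (by omega : ∑ i, d i ≠ 0)
    have hle : d i₀ ≤ 2 := hs ▸ Finset.single_le_sum (f := d) (fun i _ => Nat.zero_le _)
      (Finset.mem_univ i₀)
    have herase : ∑ j ∈ Finset.univ.erase i₀, d j = 2 - d i₀ := by
      have := Finset.add_sum_erase Finset.univ d (Finset.mem_univ i₀)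
      omega
    by_cases h2 : d i₀ = 2
    · have hrest : ∀ i, i ≠ i₀ → d i = 0 := by
        intro i hi
        have h1 : ∑ j ∈ Finset.univ.erase i₀, d j = 0 := by omega
        exact Finset.sum_eq_zero_iff.mp h1 i (Finset.mem_erase.mpr ⟨hi, Finset.mem_univ i⟩)
      have hV := vertex_sum_single n d i₀ (by omega) hrest
      have hP : ∏ i, (Nat.factorial (d i) : ℝ) = 2 := by
        rw [Finset.prod_eq_single i₀ (fun i _ hi => by rw [hrest i hi]; simp) (by simp), h2]
        norm_num [Nat.factorial]
      rw [hcenter, hV, hP, hs, hf2]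
      field_simp
      ring
    · have hd₀ : d i₀ = 1 := by omega
      have h1 : ∑ j ∈ Finset.univ.erase i₀, d j = 1 := by omega
      obtain ⟨i₁, hi₁mem, hi₁⟩ := Finset.exists_ne_zero_of_sum_ne_zero (by omega : ∑ j ∈ Finset.univ.erase i₀, d j ≠ 0)
      have hne : i₁ ≠ i₀ := (Finset.mem_erase.mp hi₁mem).1
      have hle1 : d i₁ ≤ 1 := h1 ▸ Finset.single_le_sum (f := d) (fun i _ => Nat.zero_le _) hi₁mem
      have hd₁ : d i₁ = 1 := by omega
      have hrest : ∀ i, i ≠ i₀ → i ≠ i₁ → d i = 0 := by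
        intro i hi hi'
        have h2' : ∑ j ∈ (Finset.univ.erase i₀).erase i₁, d j = 0 := by
          have := Finset.add_sum_erase (Finset.univ.erase i₀) d hi₁mem
          omega
        exact Finset.sum_eq_zero_iff.mp h2' i
          (Finset.mem_erase.mpr ⟨hi', Finset.mem_erase.mpr ⟨hi, Finset.mem_univ i⟩⟩)
      have hV := vertex_sum_pair n d i₀ i₁ (Ne.symm hne) hd₀ hd₁
      have hP : ∏ i, (Nat.factorial (d i) : ℝ) = 1 := by
        refine Finset.prod_eq_one fun i _ => ?_
        by_cases hi : i = i₀
        · subst hi; rw [hd₀]; simp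
        · by_cases hi' : i = i₁
          · subst hi'; rw [hd₁]; simp
          · rw [hrest i hi hi']; simp
      rw [hcenter, hV, hP, hs, hf2]
      field_simp
      ring

theorem stmt_10 (n : ℕ) (p : MvPolynomial (Fin n) ℝ) (hp : p.totalDegree ≤ 2) :
    ((n + 1 : ℝ) / ((n + 2) * (Nat.factorial n : ℝ)))
        * eval (fun _ => 1 / (n + 1 : ℝ)) p
      + (1 / (Nat.factorial (n + 2) : ℝ)) * ∑ j : Fin (n + 1), eval (simplexVertex n j) p
      = ∫ v in Simplex n, eval v p := by
  have hsd : ∀ d ∈ p.support, (∑ i, d i) ≤ 2 := by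
    intro d hd
    have h1 : (d.sum fun _ e => e) ≤ p.totalDegree := le_totalDegree hd
    have h2 : (d.sum fun _ e => e) = ∑ i, d i := Finsupp.sum_fintype _ _ (fun _ => rfl)
    omega
  have hR : ∫ v in Simplex n, eval v p
      = ∑ d ∈ p.support, coeff d p *
          ((∏ i, (Nat.factorial (d i) : ℝ)) / (Nat.factorial (n + ∑ i, d i) : ℝ)) := by
    have hev : ∀ v : Fin n → ℝ, eval v p = ∑ d ∈ p.support, coeff d p * ∏ i, v i ^ d i :=
      fun v => eval_eq' v p
    simp only [hev]
    rw [integral_finset_sum p.support (f := fun d v => coeff d p * ∏ i, v i ^ d i) (fun d _ =>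
      ((continuous_const.mul (continuous_mono fun i => d i)).continuousOn.integrableOn_compact
        (isCompact_simplex n)))]
    refine Finset.sum_congr rfl fun d hd => ?_
    rw [integral_const_mul, dirichlet n (fun i => d i) (hsd d hd)]
  rw [hR, eval_eq' _ p]
  simp only [fun j => eval_eq' (simplexVertex n j) p]
  rw [Finset.sum_comm, Finset.mul_sum, Finset.mul_sum, ← Finset.sum_add_distrib]
  refine Finset.sum_congr rfl fun d hd => ?_
  have hkey := key n (fun i => d i) (hsd d hd)
  calc ((n + 1 : ℝ) / ((n + 2) * (Nat.factorial n : ℝ))) * (coeff d p * ∏ i, (1 / (n + 1 : ℝ)) ^ d i)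
      + (1 / (Nat.factorial (n + 2) : ℝ)) *
          ∑ j : Fin (n + 1), coeff d p * ∏ i, (simplexVertex n j i) ^ d i
      = coeff d p * (((n + 1 : ℝ) / ((n + 2) * (Nat.factorial n : ℝ))) * ∏ i, (1 / (n + 1 : ℝ)) ^ d i
        + (1 / (Nat.factorial (n + 2) : ℝ)) * ∑ j : Fin (n + 1), ∏ i, (simplexVertex n j i) ^ d i) := by
        rw [← Finset.mul_sum]
        ring
    _ = coeff d p * ((∏ i, (Nat.factorial (d i) : ℝ)) / (Nat.factorial (n + ∑ i, d i) : ℝ)) := by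
        rw [hkey]
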